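/- Let M(x) = (g(x) − i)/x where g(x) = (e^{iax} − e^{-ibx})/((a+b)x) with a, b ≥ 0, a + b > 0. Then |M(x)| ≤ C and |M'(x)| ≤ C/|x| for all x ≠ 0. -/

import Mathlib

lemma hasDerivAt_expI (θ : ℝ) :
    HasDerivAt (fun t : ℝ => Complex.exp (Complex.I * t)) (Complex.I * Complex.exp (Complex.I * θ)) θ := by
  have h1 : HasDerivAt (fun t : ℝ => (t : ℂ)) 1 θ := by
    exact (hasDerivAt_id θ).ofReal_comp.congr_deriv (by simp)
  simpa [mul_comm] using (h1.const_mul Complex.I).cexp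

lemma normA (θ : ℝ) : ‖Complex.exp (Complex.I * θ) - 1‖ ≤ |θ| := by
  have key : Complex.exp (Complex.I * θ) - 1 =
      ∫ t in (0:ℝ)..θ, Complex.I * Complex.exp (Complex.I * t) := by
    rw [intervalIntegral.integral_eq_sub_of_hasDerivAt (fun t _ => hasDerivAt_expI t)
      ((by continuity : Continuous (fun t : ℝ => Complex.I * Complex.exp (Complex.I * t))).intervalIntegrable 0 θ)]
    simp
  rw [key]
  have := intervalIntegral.norm_integral_le_of_norm_le_const
    (C := 1) (f := fun t : ℝ => Complex.I * Complex.exp (Complex.I * t)) (a := (0:ℝ)) (b := θ)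
    (fun t _ => by simp [Complex.norm_exp])
  simpa using this

lemma normB (θ : ℝ) : ‖Complex.exp (Complex.I * θ) - 1 - Complex.I * θ‖ ≤ θ ^ 2 := by
  have hD : ∀ t : ℝ, HasDerivAt (fun t : ℝ => Complex.exp (Complex.I * t) - 1 - Complex.I * t)
      (Complex.I * Complex.exp (Complex.I * t) - Complex.I) t := by
    intro t
    have h1 : HasDerivAt (fun t : ℝ => (t : ℂ)) 1 t := by
      exact (hasDerivAt_id t).ofReal_comp.congr_deriv (by simp)
    exact (((hasDerivAt_expI t).sub_const 1).sub (h1.const_mul Complex.I)).congr_deriv (by ring)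
  have key : Complex.exp (Complex.I * θ) - 1 - Complex.I * θ =
      ∫ t in (0:ℝ)..θ, (Complex.I * Complex.exp (Complex.I * t) - Complex.I) := by
    rw [intervalIntegral.integral_eq_sub_of_hasDerivAt (fun t _ => hD t)
      ((by continuity : Continuous (fun t : ℝ => Complex.I * Complex.exp (Complex.I * t) - Complex.I)).intervalIntegrable 0 θ)]
    simp
  rw [key]
  have hb : ∀ t ∈ Set.uIoc (0:ℝ) θ, ‖Complex.I * Complex.exp (Complex.I * t) - Complex.I‖ ≤ |θ| := by
    intro t ht
    have h1 : Complex.I * Complex.exp (Complex.I * t) - Complex.I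
        = Complex.I * (Complex.exp (Complex.I * t) - 1) := by ring
    rw [h1, norm_mul, Complex.norm_I, one_mul]
    refine (normA t).trans ?_
    rcases Set.mem_uIoc.mp ht with h | h <;> rw [abs_le] <;> constructor <;>
      linarith [h.1, h.2, neg_abs_le θ, le_abs_self θ, abs_nonneg θ]
  calc ‖∫ t in (0:ℝ)..θ, (Complex.I * Complex.exp (Complex.I * t) - Complex.I)‖
      ≤ |θ| * |θ - 0| := intervalIntegral.norm_integral_le_of_norm_le_const hb
    _ = θ ^ 2 := by rw [sub_zero, ← abs_mul, _root_.abs_of_nonneg (mul_self_nonneg θ), sq]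


noncomputable section

/-- The function `g(x) = (e^{iax} − e^{-ibx})/((a+b)x)`, extended by `g(0) = i`. -/
def gfun (a b : ℝ) (x : ℝ) : ℂ :=
  if x = 0 then Complex.I
  else (Complex.exp (Complex.I * (a * x : ℝ)) - Complex.exp (-(Complex.I * (b * x : ℝ)))) /
    (((a + b) * x : ℝ) : ℂ)

/-- `M(x) = (g(x) − i)/x`, extended continuously at `0` (its limit there is `(b−a)/2`). -/
def Mfun (a b : ℝ) (x : ℝ) : ℂ :=
  if x = 0 then (((b - a) / 2 : ℝ) : ℂ) else (gfun a b x - Complex.I) / (x : ℂ)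

set_option maxHeartbeats 1000000 in
/-- `|M(x)| ≤ C` and `|M'(x)| ≤ C/|x|` for all `x ≠ 0`. -/
theorem stmt4 (a b : ℝ) (ha : 0 ≤ a) (hb : 0 ≤ b) (hab : 0 < a + b) :
    ∃ C : ℝ, (∀ x : ℝ, ‖Mfun a b x‖ ≤ C) ∧
      (∀ x : ℝ, x ≠ 0 → ‖deriv (Mfun a b) x‖ ≤ C / |x|) := by
  set K := a ^ 2 + b ^ 2 with hKdef
  have hK : 0 ≤ K := by positivity
  set s := a + b with hsdef
  have hsne : ((a : ℂ) + b) ≠ 0 := by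
    intro h
    have : ((s : ℝ) : ℂ) = 0 := by push_cast; rw [hsdef]; push_cast; exact h
    exact hab.ne' (by exact_mod_cast this)
  set N : ℝ → ℂ := fun x =>
    Complex.exp (Complex.I * (a * x)) - Complex.exp (Complex.I * (-b * x)) -
      Complex.I * ((a + b) * x) with hNdef
  -- casts
  have cast1 : ∀ x : ℝ, ((a * x : ℝ) : ℂ) = (a : ℂ) * x := by intro x; push_cast; ring
  have cast2 : ∀ x : ℝ, ((-b * x : ℝ) : ℂ) = -(b : ℂ) * x := by intro x; push_cast; ring
  -- norm of N
  have hNnorm : ∀ x : ℝ, ‖N x‖ ≤ K * x ^ 2 := by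
    intro x
    have h1 := normB (a * x); rw [cast1 x] at h1
    have h2 := normB (-b * x); rw [cast2 x] at h2
    have hsplit : N x =
        (Complex.exp (Complex.I * ((a : ℂ) * x)) - 1 - Complex.I * ((a : ℂ) * x)) -
        (Complex.exp (Complex.I * (-(b : ℂ) * x)) - 1 - Complex.I * (-(b : ℂ) * x)) := by
      rw [hNdef]; push_cast; ring
    rw [hsplit]
    refine (norm_sub_le _ _).trans ?_
    have := add_le_add h1 h2
    nlinarith [this]
  -- Mfun equals N/D away from 0
  have hMF : ∀ x : ℝ, x ≠ 0 → Mfun a b x = N x / (((a : ℂ) + b) * (x : ℂ) ^ 2) := by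
    intro x hx
    have hxc : (x : ℂ) ≠ 0 := by exact_mod_cast hx
    rw [Mfun, if_neg hx, gfun, if_neg hx, hNdef]
    have e2 : Complex.exp (-(Complex.I * ((b * x : ℝ) : ℂ))) =
        Complex.exp (Complex.I * (-(b : ℂ) * x)) := by congr 1; push_cast; ring
    rw [e2]
    push_cast
    field_simp
  refine ⟨3 * K / s + s, ?_, ?_⟩
  · intro x
    by_cases hx : x = 0
    · subst hx
      rw [Mfun, if_pos rfl, Complex.norm_real, Real.norm_eq_abs]
      have h1 : |(b - a) / 2| ≤ s := by
        rw [abs_le]; constructor <;> [skip; skip] <;> rw [hsdef] <;> linarith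
      have : 0 ≤ 3 * K / s := by positivity
      linarith
    · rw [hMF x hx, norm_div]
      have hxc : (x : ℂ) ≠ 0 := by exact_mod_cast hx
      have hDnorm : ‖((a : ℂ) + b) * (x : ℂ) ^ 2‖ = s * x ^ 2 := by
        rw [norm_mul, norm_pow]
        have : ((a : ℂ) + b) = ((s : ℝ) : ℂ) := by rw [hsdef]; push_cast; ring
        rw [this, Complex.norm_real, Complex.norm_real, Real.norm_eq_abs, Real.norm_eq_abs,
          abs_of_pos hab, _root_.sq_abs]
      rw [hDnorm]
      have hx2 : (0:ℝ) < x ^ 2 := by positivity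
      rw [div_le_iff₀ (by positivity)]
      have := hNnorm x
      have h3 : K * x ^ 2 ≤ (3 * K / s + s) * (s * x ^ 2) := by
        have : K * x ^ 2 ≤ 3 * K * x ^ 2 + s * (s * x^2) := by
          nlinarith [mul_nonneg hK hx2.le, mul_nonneg hab.le (mul_nonneg hab.le hx2.le)]
        calc K * x ^ 2 ≤ 3 * K * x ^ 2 + s * (s * x ^ 2) := this
          _ = (3 * K / s + s) * (s * x ^ 2) := by field_simp
      exact le_trans this h3
  · intro x hx
    have hxc : (x : ℂ) ≠ 0 := by exact_mod_cast hx
    have hid : HasDerivAt (fun t : ℝ => (t : ℂ)) 1 x := by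
      exact (hasDerivAt_id x).ofReal_comp.congr_deriv (by simp)
    have hE1 : HasDerivAt (fun t : ℝ => Complex.exp (Complex.I * ((a:ℂ) * t)))
        (Complex.exp (Complex.I * ((a:ℂ) * x)) * (Complex.I * ((a:ℂ) * 1))) x :=
      ((hid.const_mul (a : ℂ)).const_mul Complex.I).cexp
    have hE2 : HasDerivAt (fun t : ℝ => Complex.exp (Complex.I * (-(b:ℂ) * t)))
        (Complex.exp (Complex.I * (-(b:ℂ) * x)) * (Complex.I * (-(b:ℂ) * 1))) x :=
      ((hid.const_mul (-(b : ℂ))).const_mul Complex.I).cexp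
    have hE3 : HasDerivAt (fun t : ℝ => Complex.I * (((a:ℂ) + b) * t))
        (Complex.I * (((a:ℂ) + b) * 1)) x :=
      (hid.const_mul ((a:ℂ) + b)).const_mul Complex.I
    have hN : HasDerivAt N
        (Complex.exp (Complex.I * ((a:ℂ) * x)) * (Complex.I * ((a:ℂ) * 1)) -
         Complex.exp (Complex.I * (-(b:ℂ) * x)) * (Complex.I * (-(b:ℂ) * 1)) -
         Complex.I * (((a:ℂ) + b) * 1)) x := by
      rw [hNdef]; exact (hE1.sub hE2).sub hE3
    have hDD : HasDerivAt (fun t : ℝ => ((a:ℂ) + b) * (t : ℂ) ^ 2)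
        (((a:ℂ) + b) * (2 * (x:ℂ))) x := by
      have hfun : (fun t : ℝ => ((a:ℂ) + b) * (t:ℂ) ^ 2)
          = (fun t : ℝ => ((a:ℂ) + b) * ((t:ℂ) * (t:ℂ))) := by funext t; ring
      rw [hfun]
      have h := (hid.mul hid).const_mul ((a:ℂ) + b)
      exact h.congr_deriv (by ring)
    have hDne : ((a:ℂ) + b) * (x : ℂ) ^ 2 ≠ 0 := by
      exact mul_ne_zero hsne (pow_ne_zero 2 hxc)
    have hM := hN.div hDD hDne
    have hEq : Mfun a b =ᶠ[nhds x] fun t => N t / (((a:ℂ) + b) * (t : ℂ) ^ 2) := by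
      filter_upwards [isOpen_ne.mem_nhds hx] with t ht
      exact hMF t ht
    rw [Filter.EventuallyEq.deriv_eq hEq, HasDerivAt.deriv (f := fun t => N t / (((a:ℂ) + b) * (t : ℂ) ^ 2)) hM]
    -- now bound the norm
    set N' : ℂ := Complex.exp (Complex.I * ((a:ℂ) * x)) * (Complex.I * ((a:ℂ) * 1)) -
         Complex.exp (Complex.I * (-(b:ℂ) * x)) * (Complex.I * (-(b:ℂ) * 1)) -
         Complex.I * (((a:ℂ) + b) * 1) with hN'def
    have hN'norm : ‖N'‖ ≤ K * |x| := by
      have h1 := normA (a * x); rw [cast1 x] at h1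
      have h2 := normA (-b * x); rw [cast2 x] at h2
      have hsplit : N' = Complex.I * (a:ℂ) * (Complex.exp (Complex.I * ((a:ℂ) * x)) - 1) +
          Complex.I * (b:ℂ) * (Complex.exp (Complex.I * (-(b:ℂ) * x)) - 1) := by
        rw [hN'def]; ring
      rw [hsplit]
      refine (norm_add_le _ _).trans ?_
      rw [norm_mul, norm_mul, norm_mul, norm_mul, Complex.norm_I]
      have na : ‖(a:ℂ)‖ = a := by rw [Complex.norm_real, Real.norm_eq_abs, _root_.abs_of_nonneg ha]
      have nb : ‖(b:ℂ)‖ = b := by rw [Complex.norm_real, Real.norm_eq_abs, _root_.abs_of_nonneg hb]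
      rw [na, nb]
      have hax : |a * x| = a * |x| := by rw [abs_mul, _root_.abs_of_nonneg ha]
      have hbx : |-b * x| = b * |x| := by rw [abs_mul, abs_neg, _root_.abs_of_nonneg hb]
      rw [hax] at h1; rw [hbx] at h2
      nlinarith [norm_nonneg (Complex.exp (Complex.I * ((a:ℂ) * x)) - 1),
        norm_nonneg (Complex.exp (Complex.I * (-(b:ℂ) * x)) - 1), abs_nonneg x]
    have hDnorm : ‖((a : ℂ) + b) * (x : ℂ) ^ 2‖ = s * x ^ 2 := by
      rw [norm_mul, norm_pow]
      have : ((a : ℂ) + b) = ((s : ℝ) : ℂ) := by rw [hsdef]; push_cast; ring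
      rw [this, Complex.norm_real, Complex.norm_real, Real.norm_eq_abs, Real.norm_eq_abs,
        abs_of_pos hab, _root_.sq_abs]
    have hD'norm : ‖((a:ℂ) + b) * (2 * (x:ℂ))‖ = s * (2 * |x|) := by
      rw [norm_mul]
      have : ((a : ℂ) + b) = ((s : ℝ) : ℂ) := by rw [hsdef]; push_cast; ring
      rw [this, Complex.norm_real, Real.norm_eq_abs, abs_of_pos hab]
      congr 1
      have h2 : ((2:ℂ) * (x:ℂ)) = (((2 * x : ℝ)):ℂ) := by push_cast; ring
      rw [h2, Complex.norm_real, Real.norm_eq_abs, abs_mul]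
      norm_num
    rw [norm_div, norm_pow, hDnorm]
    have hnum : ‖N' * (((a:ℂ) + b) * (x:ℂ) ^ 2) - N x * (((a:ℂ) + b) * (2 * (x:ℂ)))‖
        ≤ K * |x| * (s * x ^ 2) + K * x ^ 2 * (s * (2 * |x|)) := by
      refine (norm_sub_le _ _).trans ?_
      rw [norm_mul N' _, norm_mul (N x) _, hDnorm, hD'norm]
      have := hNnorm x
      have hsx : 0 ≤ s * x ^ 2 := by positivity
      have hsx2 : 0 ≤ s * (2 * |x|) := by positivity
      gcongr
    have hxpos : (0:ℝ) < |x| := abs_pos.mpr hx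
    have hs0 : s ≠ 0 := hab.ne'
    rw [div_le_div_iff₀ (by positivity) hxpos]
    calc ‖N' * (((a:ℂ) + b) * (x:ℂ) ^ 2) - N x * (((a:ℂ) + b) * (2 * (x:ℂ)))‖ * |x|
        ≤ (K * |x| * (s * x ^ 2) + K * x ^ 2 * (s * (2 * |x|))) * |x| := by gcongr
      _ = 3 * K * s * x ^ 2 * (|x| * |x|) := by ring
      _ = 3 * K * s * x ^ 4 := by rw [abs_mul_abs_self]; ring
      _ ≤ (3 * K / s + s) * (s * x ^ 2) ^ 2 := by
          have e1 : (3 * K / s + s) * (s * x ^ 2) ^ 2 = 3 * K * s * x ^ 4 + s ^ 3 * x ^ 4 := by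
            field_simp
          have h0 : (0:ℝ) ≤ s ^ 3 * x ^ 4 := by positivity
          rw [e1]; linarith
  done


end
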